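/- For a linear phenylene chain with h hexagons (h ≥ 1), the Mostar index equals 72·⌊h/2⌋·⌈h/2⌉ − 24·⌊h/2⌋. -/
import Mathlib


open Finset

/-- The Mostar index of the linear phenylene chain `L_h` with `h` hexagons,
computed via the cut method. -/
def MoL (h : ℕ) : ℤ :=
  24 * ∑ i ∈ Finset.Icc 1 h, |(h : ℤ) + 1 - 2 * (i : ℤ)| +
  12 * ∑ i ∈ Finset.Icc 1 (h - 1), |(h : ℤ) - 2 * (i : ℤ)|

lemma gval : ∀ h : ℕ,
    (∑ i ∈ Finset.range h, |(h : ℤ) - 1 - 2 * (i : ℤ)|)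
      = 2 * ((h / 2 : ℕ) : ℤ) * (((h + 1) / 2 : ℕ) : ℤ)
  | 0 => by simp
  | 1 => by simp
  | (h + 2) => by
    have key := gval h
    rw [Finset.sum_range_succ', Finset.sum_range_succ]
    have h2 : ∀ i ∈ Finset.range h,
        |((h + 2 : ℕ) : ℤ) - 1 - 2 * ((i + 1 : ℕ) : ℤ)| = |(h : ℤ) - 1 - 2 * (i : ℤ)| := by
      intro i _; push_cast; ring_nf
    rw [Finset.sum_congr rfl h2, key]
    have a1 : |((h + 2 : ℕ) : ℤ) - 1 - 2 * ((h + 1 : ℕ) : ℤ)| = (h : ℤ) + 1 := by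
      push_cast
      rw [abs_of_nonpos (by linarith [Int.natCast_nonneg h])]; ring
    have a2 : |((h + 2 : ℕ) : ℤ) - 1 - 2 * ((0 : ℕ) : ℤ)| = (h : ℤ) + 1 := by
      push_cast
      rw [abs_of_nonneg (by linarith [Int.natCast_nonneg h])]; ring
    rw [a1, a2]
    have e1 : (((h + 2) / 2 : ℕ) : ℤ) = ((h / 2 : ℕ) : ℤ) + 1 := by
      exact_mod_cast congrArg (Nat.cast : ℕ → ℤ) (show (h + 2) / 2 = h / 2 + 1 by omega)
    have e2 : (((h + 2 + 1) / 2 : ℕ) : ℤ) = (((h + 1) / 2 : ℕ) : ℤ) + 1 := by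
      exact_mod_cast congrArg (Nat.cast : ℕ → ℤ) (show (h + 2 + 1) / 2 = (h + 1) / 2 + 1 by omega)
    have e3 : ((h / 2 : ℕ) : ℤ) + (((h + 1) / 2 : ℕ) : ℤ) = (h : ℤ) := by
      exact_mod_cast congrArg (Nat.cast : ℕ → ℤ) (show h / 2 + (h + 1) / 2 = h by omega)
    rw [e1, e2]
    ring_nf
    ring_nf at e3
    linarith [e3]

lemma icc_sum1 (h : ℕ) :
    (∑ i ∈ Finset.Icc 1 h, |(h : ℤ) + 1 - 2 * (i : ℤ)|)
      = ∑ i ∈ Finset.range h, |(h : ℤ) - 1 - 2 * (i : ℤ)| := by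
  rw [show Finset.Icc 1 h = Finset.Ico 1 (h + 1) by rfl, Finset.sum_Ico_eq_sum_range]
  simp only [Nat.add_sub_cancel]
  refine Finset.sum_congr rfl fun i _ => ?_
  push_cast; ring_nf

lemma icc_sum2 (m : ℕ) :
    (∑ i ∈ Finset.Icc 1 m, |((m + 1 : ℕ) : ℤ) - 2 * (i : ℤ)|)
      = ∑ i ∈ Finset.range m, |((m : ℕ) : ℤ) - 1 - 2 * (i : ℤ)| := by
  rw [show Finset.Icc 1 m = Finset.Ico 1 (m + 1) by rfl, Finset.sum_Ico_eq_sum_range]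
  simp only [Nat.add_sub_cancel]
  refine Finset.sum_congr rfl fun i _ => ?_
  push_cast; ring_nf

/-- For a linear phenylene chain with `h ≥ 1` hexagons, the Mostar index equals
`72⌊h/2⌋⌈h/2⌉ − 24⌊h/2⌋`. -/
theorem mostar_linear_chain (h : ℕ) (hh : 1 ≤ h) :
    MoL h = 72 * ((h / 2 : ℕ) : ℤ) * (((h + 1) / 2 : ℕ) : ℤ) - 24 * ((h / 2 : ℕ) : ℤ) := by
  obtain ⟨m, rfl⟩ : ∃ m, h = m + 1 := ⟨h - 1, by omega⟩
  unfold MoL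
  simp only [Nat.add_sub_cancel]
  rw [icc_sum1, icc_sum2, gval (m + 1), gval m]
  have e1 : (((m + 2) / 2 : ℕ) : ℤ) = ((m / 2 : ℕ) : ℤ) + 1 := by
    exact_mod_cast congrArg (Nat.cast : ℕ → ℤ) (show (m + 2) / 2 = m / 2 + 1 by omega)
  rw [show m + 1 + 1 = m + 2 by ring, e1]
  ring
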